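/- Let F : ℝⁿ → ℝⁿ be a polynomial map with F(0) = 0. Then there is a unique polynomial map G₁ : ℝⁿ × ℝ → ℝⁿ satisfying t • G₁(x,t) = F(t • x) for all (x,t) ∈ ℝⁿ × ℝ, and the Segre extension G(x,t) = (G₁(x,t), t) satisfies j(G)(x,t) = j(F)(t • x) for all (x,t) ∈ ℝⁿ × ℝ. In particular, G is nonsingular if and only if F is nonsingular, and j(G) is a nonzero constant if and only if j(F) is a nonzero constant. -/

import Mathlib

noncomputable section

/-- A map between real coordinate spaces is a polynomial map if each component is
given by evaluation of a real polynomial. -/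
def IsPolynomialMap {ι κ : Type*} (F : (ι → ℝ) → (κ → ℝ)) : Prop :=
  ∃ p : κ → MvPolynomial ι ℝ, ∀ x i, F x i = MvPolynomial.eval x (p i)

/-- The Jacobian determinant j(F)(p) = det J(F)(p) of a map at a point. -/
def jdet {E : Type*} [NormedAddCommGroup E] [NormedSpace ℝ E] (F : E → E) (p : E) : ℝ :=
  LinearMap.det (fderiv ℝ F p : E →ₗ[ℝ] E)

open MvPolynomial ContinuousLinearMap

/-! ### Analytic helper lemmas -/

private lemma toMatrix'_entry {m : ℕ} (f : (Fin m → ℝ) →ₗ[ℝ] (Fin m → ℝ)) (i j : Fin m) :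
    LinearMap.toMatrix' f i j = f (Pi.single j 1) i := by
  rw [LinearMap.toMatrix'_apply]

private lemma det_last_row {n : ℕ} (M : Matrix (Fin (n+1)) (Fin (n+1)) ℝ)
    (h : ∀ j, M (Fin.last n) j = if j = Fin.last n then 1 else 0) :
    M.det = (M.submatrix Fin.castSucc Fin.castSucc).det := by
  rw [Matrix.det_succ_row M (Fin.last n), Finset.sum_eq_single (Fin.last n)]
  · rw [h]
    simp only [if_pos rfl, Fin.succAbove_last, Fin.val_last]
    have : (-1 : ℝ) ^ (n + n) = 1 := Even.neg_one_pow ⟨n, rfl⟩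
    rw [this]; simp
  · intro j _ hj
    rw [h, if_neg hj]; ring
  · intro hmem; exact absurd (Finset.mem_univ _) hmem

private lemma jdet_eq_submatrix {n : ℕ} {H : (Fin (n+1) → ℝ) → (Fin (n+1) → ℝ)}
    (hH : Differentiable ℝ H) (hlast : ∀ v, H v (Fin.last n) = v (Fin.last n))
    (v : Fin (n+1) → ℝ) :
    jdet H v = Matrix.det (Matrix.of fun i j : Fin n =>
      fderiv ℝ H v (Pi.single (Fin.castSucc j) 1) (Fin.castSucc i)) := by
  have hrow : ∀ u, fderiv ℝ H v u (Fin.last n) = u (Fin.last n) := by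
    intro u
    have h1 := hasFDerivAt_pi'.1 (hH v).hasFDerivAt (Fin.last n)
    have h2 := hasFDerivAt_apply (𝕜 := ℝ) (Fin.last n) v
    have heq : (fun w => H w (Fin.last n)) = fun w : Fin (n+1) → ℝ => w (Fin.last n) :=
      funext hlast
    rw [heq] at h1
    have h3 := h1.unique h2
    have h4 := congrArg (fun T => T u) h3
    simpa using h4
  set L := (fderiv ℝ H v : (Fin (n+1) → ℝ) →ₗ[ℝ] (Fin (n+1) → ℝ)) with hL
  calc jdet H v = (LinearMap.toMatrix' L).det := (LinearMap.det_toMatrix' L).symm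
    _ = ((LinearMap.toMatrix' L).submatrix Fin.castSucc Fin.castSucc).det := by
        apply det_last_row
        intro j
        rw [toMatrix'_entry]
        show (fderiv ℝ H v) (Pi.single j 1) (Fin.last n) = _
        rw [hrow]
        simp [Pi.single_apply, eq_comm]
    _ = _ := by
        refine congrArg Matrix.det ?_
        ext i j
        rw [Matrix.submatrix_apply, toMatrix'_entry]
        rfl

private def Smap (n : ℕ) : (Fin (n+1) → ℝ) → (Fin (n+1) → ℝ) :=
  fun v => Fin.snoc (v (Fin.last n) • (v ∘ Fin.castSucc)) (v (Fin.last n))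

private lemma Smap_comp_apply (n : ℕ) (v : Fin (n+1) → ℝ) (i : Fin n) :
    Smap n v (Fin.castSucc i) = v (Fin.last n) * v (Fin.castSucc i) := by
  simp [Smap, Fin.snoc_castSucc]

private lemma Smap_last (n : ℕ) (v : Fin (n+1) → ℝ) :
    Smap n v (Fin.last n) = v (Fin.last n) := by
  simp [Smap]

private lemma Smap_cast (n : ℕ) (v : Fin (n+1) → ℝ) :
    Smap n v ∘ Fin.castSucc = v (Fin.last n) • (v ∘ Fin.castSucc) := by
  funext i
  simp [Smap_comp_apply]

private lemma hasFDerivAt_Smap_comp (n : ℕ) (v : Fin (n+1) → ℝ) (i : Fin n) :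
    HasFDerivAt (fun w => Smap n w (Fin.castSucc i))
      (v (Fin.last n) • (ContinuousLinearMap.proj (Fin.castSucc i) : (Fin (n+1) → ℝ) →L[ℝ] ℝ)
        + v (Fin.castSucc i) •
          (ContinuousLinearMap.proj (Fin.last n) : (Fin (n+1) → ℝ) →L[ℝ] ℝ)) v := by
  have h := (hasFDerivAt_apply (𝕜 := ℝ) (Fin.last n) v).mul
      (hasFDerivAt_apply (𝕜 := ℝ) (Fin.castSucc i) v)
  have heq : (fun w : Fin (n+1) → ℝ => Smap n w (Fin.castSucc i))
      = fun w => w (Fin.last n) * w (Fin.castSucc i) := funext fun w => Smap_comp_apply n w i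
  rw [heq]
  exact h

private lemma diff_Smap (n : ℕ) : Differentiable ℝ (Smap n) := by
  intro v
  apply differentiableAt_pi.2
  intro i
  induction i using Fin.lastCases with
  | last =>
      have heq : (fun w : Fin (n+1) → ℝ => Smap n w (Fin.last n)) = fun w => w (Fin.last n) :=
        funext fun w => Smap_last n w
      rw [heq]
      exact (hasFDerivAt_apply (𝕜 := ℝ) _ v).differentiableAt
  | cast i => exact (hasFDerivAt_Smap_comp n v i).differentiableAt

private lemma fderiv_Smap_entry (n : ℕ) (v : Fin (n+1) → ℝ) (i j : Fin n) :
    fderiv ℝ (Smap n) v (Pi.single (Fin.castSucc j) 1) (Fin.castSucc i)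
      = if i = j then v (Fin.last n) else 0 := by
  have h1 := hasFDerivAt_pi'.1 (diff_Smap n v).hasFDerivAt (Fin.castSucc i)
  have h2 := hasFDerivAt_Smap_comp n v i
  have h3 := h1.unique h2
  have h4 := congrArg (fun T => T (Pi.single (Fin.castSucc j) 1)) h3
  simp only [ContinuousLinearMap.comp_apply, ContinuousLinearMap.proj_apply,
    ContinuousLinearMap.add_apply, ContinuousLinearMap.smul_apply] at h4
  rw [h4]
  have hne : Fin.last n ≠ Fin.castSucc j := ((Fin.castSucc_lt_last j).ne')
  simp [Pi.single_apply, Fin.castSucc_inj, hne, mul_ite, eq_comm]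

private lemma jdet_Smap (n : ℕ) (v : Fin (n+1) → ℝ) :
    jdet (Smap n) v = (v (Fin.last n))^n := by
  rw [jdet_eq_submatrix (diff_Smap n) (Smap_last n) v]
  have heq : (Matrix.of fun i j : Fin n =>
      fderiv ℝ (Smap n) v (Pi.single (Fin.castSucc j) 1) (Fin.castSucc i))
      = v (Fin.last n) • (1 : Matrix (Fin n) (Fin n) ℝ) := by
    ext i j
    simp [fderiv_Smap_entry, Matrix.one_apply, mul_ite]
  rw [heq, Matrix.det_smul, Matrix.det_one, Fintype.card_fin, mul_one]

private def Rmap (n : ℕ) : (Fin (n+1) → ℝ) →L[ℝ] (Fin n → ℝ) :=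
  ContinuousLinearMap.pi fun j : Fin n =>
    (ContinuousLinearMap.proj (Fin.castSucc j) : (Fin (n+1) → ℝ) →L[ℝ] ℝ)

private lemma Rmap_apply (n : ℕ) (w : Fin (n+1) → ℝ) : Rmap n w = w ∘ Fin.castSucc := rfl

private lemma Rmap_single (n : ℕ) (j : Fin n) :
    Rmap n (Pi.single (Fin.castSucc j) 1) = Pi.single j 1 := by
  funext k
  have h : Rmap n (Pi.single (Fin.castSucc j) 1) k
      = (Pi.single (Fin.castSucc j) (1:ℝ) : Fin (n+1) → ℝ) (Fin.castSucc k) := rfl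
  rw [h]
  simp [Pi.single_apply, Fin.castSucc_inj]

private def FhatMap (n : ℕ) (F : (Fin n → ℝ) → (Fin n → ℝ)) :
    (Fin (n+1) → ℝ) → (Fin (n+1) → ℝ) :=
  fun v => Fin.snoc (F (v ∘ Fin.castSucc)) (v (Fin.last n))

private lemma Fhat_last (n : ℕ) (F : (Fin n → ℝ) → (Fin n → ℝ)) (v : Fin (n+1) → ℝ) :
    FhatMap n F v (Fin.last n) = v (Fin.last n) := by
  simp [FhatMap]

private lemma Fhat_comp_eq (n : ℕ) (F : (Fin n → ℝ) → (Fin n → ℝ)) (i : Fin n) :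
    (fun w : Fin (n+1) → ℝ => FhatMap n F w (Fin.castSucc i))
      = fun w => F (Rmap n w) i := by
  funext w
  simp [FhatMap, Fin.snoc_castSucc, Rmap_apply]

private lemma hasFDerivAt_Fhat_comp {n : ℕ} {F : (Fin n → ℝ) → (Fin n → ℝ)}
    (hFd : Differentiable ℝ F) (v : Fin (n+1) → ℝ) (i : Fin n) :
    HasFDerivAt (fun w => FhatMap n F w (Fin.castSucc i))
      ((ContinuousLinearMap.proj i).comp ((fderiv ℝ F (Rmap n v)).comp (Rmap n))) v := by
  have hcomp : HasFDerivAt (fun w => F (Rmap n w))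
      ((fderiv ℝ F (Rmap n v)).comp (Rmap n)) v :=
    (hFd (Rmap n v)).hasFDerivAt.comp v (Rmap n).hasFDerivAt
  have h := hasFDerivAt_pi'.1 hcomp i
  rw [Fhat_comp_eq]
  exact h

private lemma diff_Fhat {n : ℕ} {F : (Fin n → ℝ) → (Fin n → ℝ)}
    (hFd : Differentiable ℝ F) : Differentiable ℝ (FhatMap n F) := by
  intro v
  apply differentiableAt_pi.2
  intro i
  induction i using Fin.lastCases with
  | last =>
      have heq : (fun w : Fin (n+1) → ℝ => FhatMap n F w (Fin.last n))
          = fun w => w (Fin.last n) := funext fun w => Fhat_last n F w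
      rw [heq]
      exact (hasFDerivAt_apply (𝕜 := ℝ) _ v).differentiableAt
  | cast i => exact (hasFDerivAt_Fhat_comp hFd v i).differentiableAt

private lemma jdet_Fhat {n : ℕ} {F : (Fin n → ℝ) → (Fin n → ℝ)}
    (hFd : Differentiable ℝ F) (v : Fin (n+1) → ℝ) :
    jdet (FhatMap n F) v = jdet F (v ∘ Fin.castSucc) := by
  rw [jdet_eq_submatrix (diff_Fhat hFd) (Fhat_last n F) v]
  have hentry : ∀ i j : Fin n,
      fderiv ℝ (FhatMap n F) v (Pi.single (Fin.castSucc j) 1) (Fin.castSucc i)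
        = fderiv ℝ F (v ∘ Fin.castSucc) (Pi.single j 1) i := by
    intro i j
    have h1 := hasFDerivAt_pi'.1 (diff_Fhat hFd v).hasFDerivAt (Fin.castSucc i)
    have h2 := hasFDerivAt_Fhat_comp hFd v i
    have h3 := h1.unique h2
    have h4 := congrArg (fun T => T (Pi.single (Fin.castSucc j) 1)) h3
    simp only [ContinuousLinearMap.comp_apply, ContinuousLinearMap.proj_apply] at h4
    rw [h4, Rmap_single, Rmap_apply]
  have heq : (Matrix.of fun i j : Fin n =>
      fderiv ℝ (FhatMap n F) v (Pi.single (Fin.castSucc j) 1) (Fin.castSucc i))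
      = LinearMap.toMatrix'
          ((fderiv ℝ F (v ∘ Fin.castSucc) : (Fin n → ℝ) →ₗ[ℝ] (Fin n → ℝ))) := by
    ext i j
    rw [Matrix.of_apply, hentry i j, toMatrix'_entry]
    rfl
  rw [heq]
  exact LinearMap.det_toMatrix' _

/-! ### Algebraic helper lemmas -/

private lemma contDiff_mveval {ι : Type*} [Fintype ι] (p : MvPolynomial ι ℝ) :
    ContDiff ℝ ⊤ fun x : ι → ℝ => MvPolynomial.eval x p := by
  induction p using MvPolynomial.induction_on with
  | C a => simpa using contDiff_const
  | add p q hp hq => simpa using hp.add hq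
  | mul_X p i hp =>
      simpa using hp.mul ((ContinuousLinearMap.proj i : (ι → ℝ) →L[ℝ] ℝ).contDiff)

private lemma IsPolynomialMap.contDiff' {ι κ : Type*} [Fintype ι] [Fintype κ]
    {F : (ι → ℝ) → (κ → ℝ)} (h : IsPolynomialMap F) : ContDiff ℝ ⊤ F := by
  obtain ⟨p, hp⟩ := h
  have hFeq : F = fun x i => MvPolynomial.eval x (p i) := by
    funext x i; exact hp x i
  rw [hFeq]
  exact contDiff_pi.2 fun i => contDiff_mveval (p i)

private lemma IsPolynomialMap.continuous' {ι κ : Type*} {F : (ι → ℝ) → (κ → ℝ)}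
    (h : IsPolynomialMap F) : Continuous F := by
  obtain ⟨p, hp⟩ := h
  have hFeq : F = fun x i => MvPolynomial.eval x (p i) := by
    funext x i; exact hp x i
  rw [hFeq]
  exact continuous_pi fun i => MvPolynomial.continuous_eval (p i)

private lemma dense_ne_last (n : ℕ) :
    Dense {v : Fin (n+1) → ℝ | v (Fin.last n) ≠ 0} := by
  intro v
  rcases eq_or_ne (v (Fin.last n)) 0 with hv0 | hv0
  · have hc : Continuous (fun t : ℝ => Function.update v (Fin.last n) t) :=
      continuous_const.update (Fin.last n) continuous_id
    have h1 : Filter.Tendsto (fun k : ℕ => (1/(k+1) : ℝ)) Filter.atTop (nhds 0) :=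
      tendsto_one_div_add_atTop_nhds_zero_nat
    have htend := (hc.tendsto 0).comp h1
    have hupd : Function.update v (Fin.last n) 0 = v := by
      rw [← hv0]; exact Function.update_eq_self _ _
    rw [hupd] at htend
    refine mem_closure_of_tendsto htend (Filter.Eventually.of_forall fun k => ?_)
    show Function.update v (Fin.last n) (1/(k+1) : ℝ) (Fin.last n) ≠ 0
    rw [Function.update_self]
    positivity
  · exact subset_closure hv0

private lemma eval_bind₁' {n : ℕ} (v : Fin (n+1) → ℝ)
    (h : Fin n → MvPolynomial (Fin (n+1)) ℝ) (φ : MvPolynomial (Fin n) ℝ) :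
    MvPolynomial.eval v (MvPolynomial.bind₁ h φ)
      = MvPolynomial.eval (fun i => MvPolynomial.eval v (h i)) φ :=
  eval₂Hom_bind₁ (RingHom.id ℝ) v h φ

private lemma segre_construction {n : ℕ} (p : Fin n → MvPolynomial (Fin n) ℝ)
    (hp0 : ∀ i, MvPolynomial.coeff 0 (p i) = 0) :
    ∃ q : Fin n → MvPolynomial (Fin (n+1)) ℝ,
      ∀ (i : Fin n) (v : Fin (n+1) → ℝ),
        v (Fin.last n) * MvPolynomial.eval v (q i)
          = MvPolynomial.eval (fun j => v (Fin.last n) * v (Fin.castSucc j)) (p i) := by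
  have hdvd : ∀ i, (X (Fin.last n) : MvPolynomial (Fin (n+1)) ℝ) ∣
      bind₁ (fun j : Fin n => X (Fin.last n) * X (Fin.castSucc j)) (p i) := by
    intro i
    conv => rw [(p i).as_sum]
    rw [map_sum]
    apply Finset.dvd_sum
    intro m hm
    rw [bind₁_monomial]
    have hm0 : m ≠ 0 := by
      rintro rfl
      exact (MvPolynomial.mem_support_iff.1 hm) (hp0 i)
    obtain ⟨j0, hj0⟩ := Finsupp.ne_iff.1 hm0
    have hj0' : m j0 ≠ 0 := by simpa using hj0
    have h1 : (X (Fin.last n) : MvPolynomial (Fin (n+1)) ℝ)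
        ∣ (X (Fin.last n) * X (Fin.castSucc j0)) ^ (m j0) :=
      dvd_pow (dvd_mul_right _ _) hj0'
    have hmem : j0 ∈ m.support := Finsupp.mem_support_iff.2 hj0'
    have h2 : ((X (Fin.last n) * X (Fin.castSucc j0) : MvPolynomial (Fin (n+1)) ℝ) ^ (m j0))
        ∣ ∏ j ∈ m.support,
            (X (Fin.last n) * X (Fin.castSucc j) : MvPolynomial (Fin (n+1)) ℝ) ^ (m j) :=
      Finset.dvd_prod_of_mem _ hmem
    exact (h1.trans h2).mul_left _
  choose q hq using hdvd
  refine ⟨q, fun i v => ?_⟩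
  have h2 := congrArg (MvPolynomial.eval v) (hq i)
  rw [eval_bind₁'] at h2
  simp only [map_mul, MvPolynomial.eval_X] at h2
  exact h2.symm

/-! ### Main theorem -/

theorem stmt5 (n : ℕ) (F : (Fin n → ℝ) → (Fin n → ℝ))
    (hF : IsPolynomialMap F) (h0 : F 0 = 0) :
    (∃! G₁ : (Fin (n + 1) → ℝ) → (Fin n → ℝ), IsPolynomialMap G₁ ∧
      ∀ v : Fin (n + 1) → ℝ,
        v (Fin.last n) • G₁ v = F (v (Fin.last n) • (v ∘ Fin.castSucc))) ∧
    ∀ G₁ : (Fin (n + 1) → ℝ) → (Fin n → ℝ), IsPolynomialMap G₁ →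
      (∀ v : Fin (n + 1) → ℝ,
        v (Fin.last n) • G₁ v = F (v (Fin.last n) • (v ∘ Fin.castSucc))) →
      ∀ G : (Fin (n + 1) → ℝ) → (Fin (n + 1) → ℝ),
        (∀ v, G v = Fin.snoc (G₁ v) (v (Fin.last n))) →
        (∀ v, jdet G v = jdet F (v (Fin.last n) • (v ∘ Fin.castSucc))) ∧
        ((∀ v, jdet G v ≠ 0) ↔ (∀ x, jdet F x ≠ 0)) ∧
        ((∃ c : ℝ, c ≠ 0 ∧ ∀ v, jdet G v = c) ↔ (∃ c : ℝ, c ≠ 0 ∧ ∀ x, jdet F x = c)) := by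
  obtain ⟨p, hp⟩ := hF
  have hFpoly : IsPolynomialMap F := ⟨p, hp⟩
  have hp0 : ∀ i, MvPolynomial.coeff 0 (p i) = 0 := by
    intro i
    have h1 : F 0 i = MvPolynomial.eval (0 : Fin n → ℝ) (p i) := hp 0 i
    rw [h0] at h1
    have h2 : MvPolynomial.eval (0 : Fin n → ℝ) (p i)
        = MvPolynomial.coeff 0 (p i) := by
      rw [MvPolynomial.eval_zero, MvPolynomial.constantCoeff_eq]
    rw [h2] at h1
    exact h1.symm
  obtain ⟨q, hq⟩ := segre_construction p hp0
  -- the canonical choice of G₁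
  set G₁c : (Fin (n+1) → ℝ) → (Fin n → ℝ) := fun v i => MvPolynomial.eval v (q i) with hG₁c
  have hG₁c_poly : IsPolynomialMap G₁c := ⟨q, fun v i => rfl⟩
  have hsmul : ∀ v : Fin (n+1) → ℝ,
      (fun j => v (Fin.last n) * v (Fin.castSucc j)) = v (Fin.last n) • (v ∘ Fin.castSucc) := by
    intro v; funext j; simp
  have hprop : ∀ v : Fin (n+1) → ℝ,
      v (Fin.last n) • G₁c v = F (v (Fin.last n) • (v ∘ Fin.castSucc)) := by
    intro v
    funext i
    have h1 := hq i v
    rw [hsmul v] at h1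
    calc (v (Fin.last n) • G₁c v) i = v (Fin.last n) * MvPolynomial.eval v (q i) := rfl
      _ = MvPolynomial.eval (v (Fin.last n) • (v ∘ Fin.castSucc)) (p i) := h1
      _ = F (v (Fin.last n) • (v ∘ Fin.castSucc)) i := (hp _ i).symm
  have huniq : ∀ G₁' : (Fin (n+1) → ℝ) → (Fin n → ℝ), IsPolynomialMap G₁' →
      (∀ v : Fin (n+1) → ℝ,
        v (Fin.last n) • G₁' v = F (v (Fin.last n) • (v ∘ Fin.castSucc))) → G₁' = G₁c := by
    intro G₁' hpoly' hprop'
    refine Continuous.ext_on (dense_ne_last n) hpoly'.continuous' hG₁c_poly.continuous' ?_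
    intro v hv
    have h1 : v (Fin.last n) • G₁' v = v (Fin.last n) • G₁c v :=
      (hprop' v).trans (hprop v).symm
    exact smul_right_injective _ hv h1
  constructor
  · exact ⟨G₁c, ⟨hG₁c_poly, hprop⟩, fun y hy => huniq y hy.1 hy.2⟩
  -- second part
  intro G₁ hpoly₁ hprop₁ G hG
  have hFcd : ContDiff ℝ ⊤ F := hFpoly.contDiff'
  have hFd : Differentiable ℝ F := hFcd.differentiable (by simp)
  obtain ⟨r, hr⟩ := hpoly₁
  have hGfun : G = fun v =>
      Fin.snoc (fun i => MvPolynomial.eval v (r i)) (v (Fin.last n)) := by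
    funext v
    rw [hG v]
    have hg1 : G₁ v = fun i => MvPolynomial.eval v (r i) := funext fun i => hr v i
    rw [hg1]
  have hGcd : ContDiff ℝ ⊤ G := by
    rw [hGfun]
    apply contDiff_pi.2
    intro i
    induction i using Fin.lastCases with
    | last =>
        simp only [Fin.snoc_last]
        exact (ContinuousLinearMap.proj (Fin.last n) : (Fin (n+1) → ℝ) →L[ℝ] ℝ).contDiff
    | cast i =>
        simp only [Fin.snoc_castSucc]
        exact contDiff_mveval (r i)
  have hGd : Differentiable ℝ G := hGcd.differentiable (by simp)
  have hGlast : ∀ w, G w (Fin.last n) = w (Fin.last n) := by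
    intro w; rw [hG w]; simp
  have hGcast : ∀ w, G w ∘ Fin.castSucc = G₁ w := by
    intro w; funext i
    show G w (Fin.castSucc i) = G₁ w i
    rw [hG w]; simp
  have hSGfun : Smap n ∘ G = FhatMap n F ∘ Smap n := by
    funext w
    show Smap n (G w) = FhatMap n F (Smap n w)
    have e1 : Smap n (G w) = Fin.snoc (w (Fin.last n) • G₁ w) (w (Fin.last n)) := by
      unfold Smap
      rw [hGlast w, hGcast w]
    have e2 : FhatMap n F (Smap n w)
        = Fin.snoc (F (w (Fin.last n) • (w ∘ Fin.castSucc))) (w (Fin.last n)) := by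
      unfold FhatMap
      rw [Smap_cast, Smap_last]
    rw [e1, e2, hprop₁ w]
  -- main identity on the dense set
  have hD : ∀ v ∈ {v : Fin (n+1) → ℝ | v (Fin.last n) ≠ 0},
      jdet G v = jdet F (v (Fin.last n) • (v ∘ Fin.castSucc)) := by
    intro v hv
    have hc1 : fderiv ℝ (Smap n ∘ G) v
        = (fderiv ℝ (Smap n) (G v)).comp (fderiv ℝ G v) :=
      fderiv_comp v (diff_Smap n (G v)) (hGd v)
    have hc2 : fderiv ℝ (FhatMap n F ∘ Smap n) v
        = (fderiv ℝ (FhatMap n F) (Smap n v)).comp (fderiv ℝ (Smap n) v) :=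
      fderiv_comp v (diff_Fhat hFd (Smap n v)) (diff_Smap n v)
    have e : (fderiv ℝ (Smap n) (G v)).comp (fderiv ℝ G v)
        = (fderiv ℝ (FhatMap n F) (Smap n v)).comp (fderiv ℝ (Smap n) v) := by
      rw [← hc1, ← hc2, hSGfun]
    have edet := congrArg
      (fun L : (Fin (n+1) → ℝ) →L[ℝ] (Fin (n+1) → ℝ) =>
        LinearMap.det (L : (Fin (n+1) → ℝ) →ₗ[ℝ] (Fin (n+1) → ℝ))) e
    replace edet : LinearMap.det (((fderiv ℝ (Smap n) (G v) : (Fin (n+1) → ℝ) →ₗ[ℝ] (Fin (n+1) → ℝ))).comp (fderiv ℝ G v : (Fin (n+1) → ℝ) →ₗ[ℝ] (Fin (n+1) → ℝ)))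
        = LinearMap.det (((fderiv ℝ (FhatMap n F) (Smap n v) : (Fin (n+1) → ℝ) →ₗ[ℝ] (Fin (n+1) → ℝ))).comp
          (fderiv ℝ (Smap n) v : (Fin (n+1) → ℝ) →ₗ[ℝ] (Fin (n+1) → ℝ))) := edet
    rw [LinearMap.det_comp, LinearMap.det_comp] at edet
    have hj1 : jdet (Smap n) (G v) = (v (Fin.last n))^n := by
      rw [jdet_Smap, hGlast v]
    have hj2 : jdet (Smap n) v = (v (Fin.last n))^n := jdet_Smap n v
    have hj3 : jdet (FhatMap n F) (Smap n v)
        = jdet F (v (Fin.last n) • (v ∘ Fin.castSucc)) := by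
      rw [jdet_Fhat hFd, Smap_cast]
    have edet' : jdet (Smap n) (G v) * jdet G v
        = jdet (FhatMap n F) (Smap n v) * jdet (Smap n) v := edet
    rw [hj1, hj2, hj3] at edet'
    have key : (v (Fin.last n))^n * jdet G v
        = jdet F (v (Fin.last n) • (v ∘ Fin.castSucc)) * (v (Fin.last n))^n := edet'
    have hpow : (v (Fin.last n))^n ≠ 0 := pow_ne_zero n hv
    have := key.trans (mul_comm _ _)
    exact mul_left_cancel₀ hpow this
  have hcont1 : Continuous (fun v => jdet G v) :=
    ContinuousLinearMap.continuous_det.comp (hGcd.continuous_fderiv (by simp))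
  have hcontinner : Continuous
      (fun v : Fin (n+1) → ℝ => v (Fin.last n) • (v ∘ Fin.castSucc)) :=
    continuous_pi fun i => (continuous_apply (Fin.last n)).mul (continuous_apply (Fin.castSucc i))
  have hcont2 : Continuous
      (fun v : Fin (n+1) → ℝ => jdet F (v (Fin.last n) • (v ∘ Fin.castSucc))) :=
    (ContinuousLinearMap.continuous_det.comp (hFcd.continuous_fderiv (by simp))).comp hcontinner
  have hmainfun := Continuous.ext_on (dense_ne_last n) hcont1 hcont2 hD
  have hmain : ∀ v, jdet G v = jdet F (v (Fin.last n) • (v ∘ Fin.castSucc)) :=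
    fun v => congrFun hmainfun v
  refine ⟨hmain, ?_, ?_⟩
  · constructor
    · intro h x
      have h1 := hmain (Fin.snoc x 1)
      have hs1 : (Fin.snoc x 1 : Fin (n+1) → ℝ) (Fin.last n) = 1 := Fin.snoc_last _ _
      have hs2 : (Fin.snoc x (1:ℝ) : Fin (n+1) → ℝ) ∘ Fin.castSucc = x :=
        funext fun i => Fin.snoc_castSucc _ _ i
      rw [hs1, hs2, one_smul] at h1
      rw [← h1]
      exact h _
    · intro h v
      rw [hmain v]
      exact h _
  · constructor
    · rintro ⟨c, hc, hcall⟩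
      refine ⟨c, hc, fun x => ?_⟩
      have h1 := hmain (Fin.snoc x 1)
      have hs1 : (Fin.snoc x 1 : Fin (n+1) → ℝ) (Fin.last n) = 1 := Fin.snoc_last _ _
      have hs2 : (Fin.snoc x (1:ℝ) : Fin (n+1) → ℝ) ∘ Fin.castSucc = x :=
        funext fun i => Fin.snoc_castSucc _ _ i
      rw [hs1, hs2, one_smul] at h1
      rw [← h1]
      exact hcall _
    · rintro ⟨c, hc, hcall⟩
      refine ⟨c, hc, fun v => ?_⟩
      rw [hmain v]
      exact hcall _
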